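/- Let O ⊆ P contain A with O ∩ B = ∅, and let J be an order ideal of P with set D = {i : (i,−i) ∈ J}. Then for i ∈ D one has w^{O,J}(i) = −i; moreover, for any i₁ < i < i₂ with i₁, i₂ ∈ D ∪ {0, n+1}, one has i₁ < |w^{O,J}(i)| < i₂. -/

import Mathlib

open scoped Classical Pointwise

noncomputable section

/-- Position of `j` in the total order `1 ⋖ … ⋖ n ⋖ -n ⋖ … ⋖ -1` on `N`. -/
def ordKey (n : ℕ) (j : ℤ) : ℤ := if 0 < j then j else 2 * n + 1 + j

/-- Membership in the type C Gelfand–Tsetlin poset `P`: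
pairs `(i,j)` with `1 ≤ i ≤ n` and `i ≤ |j| ≤ n`. -/
def inP (n : ℕ) (p : ℤ × ℤ) : Prop :=
  1 ≤ p.1 ∧ p.1 ≤ (n : ℤ) ∧ p.1 ≤ |p.2| ∧ |p.2| ≤ (n : ℤ)

/-- The order relation `⪯` of `P`: `(i₁,j₁) ⪯ (i₂,j₂)` iff `i₁ ≤ i₂` and `j₁ ⩽̇ j₂`. -/
def ple (n : ℕ) (p q : ℤ × ℤ) : Prop :=
  p.1 ≤ q.1 ∧ ordKey n p.2 ≤ ordKey n q.2

/-- Strict version of `⪯`. -/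
def plt (n : ℕ) (p q : ℤ × ℤ) : Prop := ple n p q ∧ p ≠ q

/-- The elements of `N = {1,…,n,-n,…,-1}` listed in increasing `⋖` order. -/
def jList (n : ℕ) : List ℤ :=
  ((List.range n).map fun t => (t : ℤ) + 1) ++ ((List.range n).map fun t => (t : ℤ) - n)

/-- All pairs `(i,j)` with `i ∈ [1,n]`, `j ∈ N`, ordered first by `i` increasing,
then by `j` increasing with respect to `⋖`. -/
def posList (n : ℕ) : List (ℤ × ℤ) :=
  (List.range n).flatMap fun a => (jList n).map fun j => ((a : ℤ) + 1, j)

/-- `P` as a finite set. -/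
def Pfin (n : ℕ) : Finset (ℤ × ℤ) := (posList n).toFinset.filter (inP n)

/-- `N` as a finite set. -/
def Nfin (n : ℕ) : Finset ℤ := (jList n).toFinset

/-- The diagonal `A = {(i,i) : 1 ≤ i ≤ n}`. -/
def Aset (n : ℕ) : Finset (ℤ × ℤ) :=
  (Finset.range n).image fun t => (((t : ℤ) + 1, (t : ℤ) + 1) : ℤ × ℤ)

/-- Order ideals (downward closed subsets) of `P`. -/
def IsIdeal (n : ℕ) (J : Finset (ℤ × ℤ)) : Prop :=
  (∀ p ∈ J, inP n p) ∧ ∀ p ∈ J, ∀ q ∈ Pfin n, ple n q p → q ∈ J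

/-- The set of `≺`-maximal elements of `J`. -/
def maxPrec (n : ℕ) (J : Finset (ℤ × ℤ)) : Finset (ℤ × ℤ) :=
  J.filter fun p => ∀ q ∈ J, ple n p q → q = p

/-- `M_O(J) = (J ∩ O) ∪ max_≺(J)`. -/
def MO (n : ℕ) (O J : Finset (ℤ × ℤ)) : Finset (ℤ × ℤ) := (J ∩ O) ∪ maxPrec n J

/-- The permutation `w_M`: the product of the transpositions `s_{i,j}` over `(i,j) ∈ M`,
ordered first by `i` increasing and then by `j` increasing with respect to `⋖`
(the leftmost factor acts last). -/
def wPerm (n : ℕ) (M : Finset (ℤ × ℤ)) : Equiv.Perm ℤ :=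
  (((posList n).filter fun p => decide (p ∈ M)).map fun p => Equiv.swap p.1 p.2).prod

/-- `w^{O,J} = w_O⁻¹ ⬝ w_{M_O(J)}`. -/
def wOJ (n : ℕ) (O J : Finset (ℤ × ℤ)) : Equiv.Perm ℤ :=
  (wPerm n O)⁻¹ * wPerm n (MO n O J)

/-- The principal order ideal `⟨i,j⟩` of `(i,j) ∈ P`. -/
def princ (n : ℕ) (p : ℤ × ℤ) : Finset (ℤ × ℤ) := (Pfin n).filter fun q => ple n q p

/-- `r(i,j) = w^{O,⟨i,j⟩}(i)`. -/
def rMap (n : ℕ) (O : Finset (ℤ × ℤ)) (i j : ℤ) : ℤ := wOJ n O (princ n (i, j)) i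

/-- Inverse of `ordKey` (on the relevant range `[1, 2n]`). -/
def invOrdKey (n : ℕ) (t : ℤ) : ℤ := if t ≤ (n : ℤ) then t else t - (2 * n + 1)

/-- The `⋖`-maximal `j'` with `j' ⋖ j` and `(i,j') ∈ O`. -/
def prevO (n : ℕ) (O : Finset (ℤ × ℤ)) (i j : ℤ) : ℤ :=
  invOrdKey n (WithBot.unbotD 0 (((Nfin n).filter fun j' => (i, j') ∈ O ∧ ordKey n j' < ordKey n j).image
    (ordKey n)).max)

/-- The pipe-dream linear transform `ξ` of `ℝ^P` (coordinates outside `P` are untouched):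
`ξ(ε_{i,i}) = ε_{i,r(i,i)}` and `ξ(ε_{i,j}) = ε_{i,r(i,j)} - ε_{i,r(i,j')}` for `j ≠ i`,
where `j'` is `⋖`-maximal with `j' ⋖ j` and `(i,j') ∈ O`. -/
def xiMap (n : ℕ) (O : Finset (ℤ × ℤ)) (x : (ℤ × ℤ) → ℝ) : (ℤ × ℤ) → ℝ := fun q =>
  if inP n q then
    (∑ j ∈ (Nfin n).filter (fun j => inP n (q.1, j) ∧ rMap n O q.1 j = q.2), x (q.1, j))
    - (∑ j ∈ (Nfin n).filter
        (fun j => inP n (q.1, j) ∧ j ≠ q.1 ∧ rMap n O q.1 (prevO n O q.1 j) = q.2), x (q.1, j))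
  else x q

/-- Indicator vector `1_{M_O(J)} ∈ ℝ^P`. -/
def indicMO (n : ℕ) (O J : Finset (ℤ × ℤ)) : (ℤ × ℤ) → ℝ := fun p =>
  if p ∈ MO n O J then 1 else 0

/-- The fundamental marked chain-order polytope `𝒬_O(ω_k)`:
the convex hull of the vectors `1_{M_O(J)}`, `J ∈ 𝒥ₖ`. -/
def QOfund (n : ℕ) (O : Finset (ℤ × ℤ)) (k : ℕ) : Set ((ℤ × ℤ) → ℝ) :=
  convexHull ℝ {x | ∃ J : Finset (ℤ × ℤ),
    IsIdeal n J ∧ (J ∩ Aset n).card = k ∧ x = indicMO n O J}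

/-- The marked chain-order polytope `𝒬_O(λ)` for `λ = a₁ω₁ + … + a_nω_n`:
the Minkowski sum `a₁𝒬_O(ω₁) + … + a_n𝒬_O(ω_n)`. -/
def QO (n : ℕ) (O : Finset (ℤ × ℤ)) (a : ℕ → ℕ) : Set ((ℤ × ℤ) → ℝ) :=
  ∑ k ∈ Finset.Icc 1 n, a k • QOfund n O k

/-- Integrality (lattice point) predicate. -/
def IsLat (x : (ℤ × ℤ) → ℝ) : Prop := ∀ p, ∃ m : ℤ, x p = m

/-- Type B: `λ(i) = a_i + … + a_{n-1} + a_n/2`. -/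
def lamB (n : ℕ) (a : ℕ → ℕ) (i : ℤ) : ℝ :=
  (∑ t ∈ Finset.Icc i.toNat (n - 1), (a t : ℝ)) + (a n : ℝ) / 2

/-- The type B poset polytope `𝒬^B_O(λ)` (H-description with factor `1/2`
on the coordinates in `B = {(i,-i)}`). -/
def QB (n : ℕ) (O : Finset (ℤ × ℤ)) (lam : ℤ → ℝ) : Set ((ℤ × ℤ) → ℝ) :=
  {x | (∀ i : ℤ, 1 ≤ i → i ≤ (n : ℤ) → x (i, i) = lam i) ∧
    (∀ p, inP n p → 0 ≤ x p) ∧ (∀ p, ¬ inP n p → x p = 0) ∧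
    ∀ (pq rs : ℤ × ℤ) (c : List (ℤ × ℤ)), pq ∈ O → inP n rs →
      (∀ q ∈ c, inP n q ∧ q ∉ O) →
      List.Chain' (plt n) (pq :: (c ++ [rs])) →
      (c.map x).sum ≤ x pq - (if rs.2 = -rs.1 then (1 : ℝ) / 2 else 1) * x rs}

/-- The point `x^{J,D}`. -/
def xJD (n : ℕ) (O J : Finset (ℤ × ℤ)) (D : Finset ℤ) : (ℤ × ℤ) → ℝ := fun p =>
  if p ∈ MO n O J then (if p.2 = -p.1 ∧ p.1 ∉ D then 2 else 1) else 0

/-- The projection `π : ℝ^P → ℝ^{P∖A}` (realized by zeroing the `A`-coordinates). -/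
def piA (x : (ℤ × ℤ) → ℝ) : (ℤ × ℤ) → ℝ := fun p => if p.2 = p.1 then 0 else x p

/-- The transformed type B poset polytope `Π^B_O(λ) = πξ(𝒬^B_O(λ))`. -/
def PiB (n : ℕ) (O : Finset (ℤ × ℤ)) (a : ℕ → ℕ) : Set ((ℤ × ℤ) → ℝ) :=
  (fun x => piA (xiMap n O x)) '' QB n O (lamB n a)

/-- The point `y^D ∈ ℝ^{P∖A}`. -/
def yD (D : Finset ℤ) : (ℤ × ℤ) → ℝ := fun p => if p.2 = -p.1 ∧ p.1 ∈ D then 1 else 0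

namespace Stmt15Aux

lemma Equiv.Perm.apply_inv_self (f : Equiv.Perm ℤ) (x : ℤ) : f (f⁻¹ x) = x :=
  Equiv.apply_symm_apply f x

lemma Equiv.Perm.inv_apply_self (f : Equiv.Perm ℤ) (x : ℤ) : f⁻¹ (f x) = x :=
  Equiv.symm_apply_apply f x

/-! ### Generic permutation-product lemmas -/

/-- product of swaps `swap k j` over a list. -/
def Fp (k : ℤ) (L : List ℤ) : Equiv.Perm ℤ := (L.map fun j => Equiv.swap k j).prod

@[simp] lemma Fp_nil (k : ℤ) : Fp k [] = 1 := rfl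

lemma Fp_cons (k a : ℤ) (L : List ℤ) : Fp k (a :: L) = Equiv.swap k a * Fp k L := by
  simp [Fp]

lemma Fp_append (k : ℤ) (S T : List ℤ) : Fp k (S ++ T) = Fp k S * Fp k T := by
  simp [Fp]

lemma Fp_notmem {k x : ℤ} {L : List ℤ} (h : x ∉ L) (hx : x ≠ k) : Fp k L x = x := by
  induction L with
  | nil => rfl
  | cons a L ih =>
      rw [Fp_cons, Equiv.Perm.mul_apply, ih (fun hm => h (List.mem_cons_of_mem _ hm))]
      exact Equiv.swap_apply_of_ne_of_ne hx (fun he => h (he ▸ (List.mem_cons_self (a := a) (l := L))))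

lemma Fp_last {k b : ℤ} {S : List ℤ} (hk : b ∉ S) (hbk : b ≠ k) :
    Fp k (S ++ [b]) k = b := by
  rw [Fp_append, Equiv.Perm.mul_apply]
  have : Fp k [b] k = b := by simp [Fp]
  rw [this, Fp_notmem hk hbk]

/-- going backward: the value of `Fp` at a member of a sorted list. -/
lemma Fp_back {k : ℤ} (key : ℤ → ℤ) {L : List ℤ} (hk : k ∉ L) (hnd : L.Nodup)
    (hs : L.Pairwise fun a b => key a < key b) {y : ℤ} (hy : y ∈ L) :
    Fp k L y = k ∨ (Fp k L y ∈ L ∧ key (Fp k L y) < key y) := by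
  induction L with
  | nil => cases hy
  | cons a L ih =>
      have hkL : k ∉ L := fun h => hk (List.mem_cons_of_mem _ h)
      have haL : a ∉ L := (List.nodup_cons.1 hnd).1
      have hka : a ≠ k := fun h => hk (h ▸ (List.mem_cons_self (a := a) (l := L)))
      rw [Fp_cons, Equiv.Perm.mul_apply]
      rcases List.mem_cons.1 hy with rfl | hyL
      · rw [Fp_notmem haL hka, Equiv.swap_apply_right]
        exact Or.inl rfl
      · rcases ih hkL (List.nodup_cons.1 hnd).2 (List.pairwise_cons.1 hs).2 hyL with h | ⟨hm, hlt⟩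
        · rw [h, Equiv.swap_apply_left]
          exact Or.inr ⟨(List.mem_cons_self (a := a) (l := L)), (List.pairwise_cons.1 hs).1 y hyL⟩
        · have h1 : Fp k L y ≠ k := fun he => hkL (he ▸ hm)
          have h2 : Fp k L y ≠ a := fun he => haL (he ▸ hm)
          rw [Equiv.swap_apply_of_ne_of_ne h1 h2]
          exact Or.inr ⟨List.mem_cons_of_mem _ hm, hlt⟩

/-- removing the `= k` entries does not change the product. -/
lemma Fp_filter_ne (k : ℤ) (L : List ℤ) :
    Fp k L = Fp k (L.filter fun j => decide (j ≠ k)) := by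
  induction L with
  | nil => rfl
  | cons a L ih =>
      by_cases ha : a = k
      · subst ha
        rw [Fp_cons, Equiv.swap_self, Equiv.Perm.refl_mul]
        simpa using ih
      · rw [Fp_cons, List.filter_cons_of_pos (by simpa using ha), Fp_cons, ih]

lemma perm_fix_or {g : Equiv.Perm ℤ} {s : ℤ → Prop} (h : ∀ x, ¬ s x → g x = x) (x : ℤ) :
    g x = x ∨ (s x ∧ s (g x)) := by
  by_cases hx : s x
  · by_cases hgx : s (g x)
    · exact Or.inr ⟨hx, hgx⟩
    · have hx2 : g (g x) = g x := h _ hgx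
      exact Or.inl (g.injective hx2)
  · exact Or.inl (h _ hx)

lemma conj_fix_or (ρ g : Equiv.Perm ℤ) {s : ℤ → Prop} (h : ∀ x, ¬ s x → g x = x) (y : ℤ) :
    (ρ * g * ρ⁻¹) y = y ∨
      ((∃ x, s x ∧ y = ρ x) ∧ ∃ x', s x' ∧ (ρ * g * ρ⁻¹) y = ρ x') := by
  rcases perm_fix_or h (ρ⁻¹ y) with hfix | ⟨hs, hs'⟩
  · left
    rw [Equiv.Perm.mul_apply, Equiv.Perm.mul_apply, hfix]
    exact Equiv.apply_symm_apply ρ y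
  · right
    refine ⟨⟨ρ⁻¹ y, hs, (Equiv.Perm.apply_inv_self ρ y).symm⟩, ⟨g (ρ⁻¹ y), hs', ?_⟩⟩
    simp [Equiv.Perm.mul_apply]

lemma perm_inv_fix {g : Equiv.Perm ℤ} {x : ℤ} (h : g x = x) : g⁻¹ x = x := by
  conv_lhs => rw [← h]
  exact Equiv.Perm.inv_apply_self g x

/-- a permutation preserving a ball (in the sense of images) reflects it, too. -/
lemma preserve_rev (W : Equiv.Perm ℤ) (i : ℤ) (h : ∀ x, |x| < i → |W x| < i)
    {x : ℤ} (hx : |W x| < i) : |x| < i := by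
  classical
  set B : Finset ℤ := Finset.Icc (1 - i) (i - 1) with hB
  have hmem : ∀ z : ℤ, z ∈ B ↔ |z| < i := by
    intro z
    rw [hB, Finset.mem_Icc, abs_lt]
    omega
  have himg : B.image W ⊆ B := by
    intro z hz
    rcases Finset.mem_image.1 hz with ⟨b, hb, rfl⟩
    exact (hmem _).2 (h b ((hmem _).1 hb))
  have hcard : B.card ≤ (B.image W).card := by
    rw [Finset.card_image_of_injective B W.injective]
  have heq : B.image W = B := Finset.eq_of_subset_of_card_le himg hcard
  have : W x ∈ B.image W := heq.symm ▸ (hmem _).2 hx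
  rcases Finset.mem_image.1 this with ⟨b, hb, hbx⟩
  have : b = x := W.injective hbx
  exact this ▸ (hmem _).1 hb

/-! ### Lists split lemmas -/

lemma filter_split (key : ℤ → ℤ) (p q : ℤ → Bool) :
    ∀ (L : List ℤ), L.Pairwise (fun a b => key a < key b) →
    (∀ a b, a ∈ L → b ∈ L → p a = true → p b = true → key a < key b → q b = true → q a = true) →
    L.filter p = L.filter (fun j => p j && q j) ++ L.filter (fun j => p j && !(q j)) := by
  intro L
  induction L with
  | nil => intro _ _; rfl
  | cons a L ih =>
      intro hs hcond
      have hs' := (List.pairwise_cons.1 hs).2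
      have hlt := (List.pairwise_cons.1 hs).1
      have ihL := ih hs' (fun x y hx hy px py hk qy =>
        hcond x y (List.mem_cons_of_mem _ hx) (List.mem_cons_of_mem _ hy) px py hk qy)
      by_cases hp : p a = true
      · by_cases hq : q a = true
        · rw [List.filter_cons_of_pos (by simp [hp]),
            List.filter_cons_of_pos (by simp [hp, hq]),
            List.filter_cons_of_neg (by simp [hp, hq]), List.cons_append, ihL]
        · have hnil : L.filter (fun j => p j && q j) = [] := by
            apply List.filter_eq_nil_iff.2
            intro b hb
            simp only [Bool.and_eq_true, not_and]
            intro pb qb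
            exact hq (hcond a b ((List.mem_cons_self (a := a) (l := L))) (List.mem_cons_of_mem _ hb)
              hp pb (hlt b hb) qb)
          have heq : L.filter p = L.filter (fun j => p j && !(q j)) := by
            rw [ihL, hnil, List.nil_append]
          rw [List.filter_cons_of_pos (by simp [hp]),
            List.filter_cons_of_neg (by simp [hp, hq]),
            List.filter_cons_of_pos (by simp [hp, hq]), hnil, List.nil_append, heq]
      · rw [List.filter_cons_of_neg (by simp [hp]),
          List.filter_cons_of_neg (by simp [hp]),
          List.filter_cons_of_neg (by simp [hp]), ihL]

lemma filter_eq_singleton {c : ℤ} {p : ℤ → Bool} :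
    ∀ {L : List ℤ}, L.Nodup → c ∈ L → (∀ x ∈ L, p x = true ↔ x = c) →
    L.filter p = [c] := by
  intro L
  induction L with
  | nil => intro _ h; cases h
  | cons a L ih =>
      intro hnd hc hiff
      rcases List.mem_cons.1 hc with rfl | hcL
      · rw [List.filter_cons_of_pos ((hiff c ((List.mem_cons_self (a := c) (l := L)))).2 rfl)]
        have : L.filter p = [] := by
          apply List.filter_eq_nil_iff.2
          intro b hb hpb
          exact (List.nodup_cons.1 hnd).1
            (((hiff b (List.mem_cons_of_mem _ hb)).1 hpb) ▸ hb)
        rw [this]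
      · have hna : ¬ (p a = true) := fun hpa =>
          (List.nodup_cons.1 hnd).1 (((hiff a ((List.mem_cons_self (a := a) (l := L)))).1 hpa) ▸ hcL)
        rw [List.filter_cons_of_neg (by simpa using hna)]
        exact ih (List.nodup_cons.1 hnd).2 hcL
          (fun x hx => hiff x (List.mem_cons_of_mem _ hx))

/-! ### `jList` and `Pfin` facts -/

lemma jList_eq (n : ℕ) : jList n = ((List.range n).map fun t : ℕ => (t : ℤ) + 1)
    ++ ((List.range n).map fun t : ℕ => (t : ℤ) - n) := by
  unfold jList
  congr 1 <;>
  · show ((List.range n).flatMap fun a => [((a:ℕ):ℤ)]).map _ = _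
    rw [← List.map_eq_flatMap, List.map_map]
    rfl

lemma mem_jList {n : ℕ} {j : ℤ} : j ∈ jList n ↔ 1 ≤ |j| ∧ |j| ≤ (n : ℤ) := by
  constructor
  · intro h
    rw [jList_eq] at h
    simp only [List.mem_append, List.mem_map, List.mem_range] at h
    rcases h with ⟨t, ht, rfl⟩ | ⟨t, ht, rfl⟩
    · have h0 : (0:ℤ) ≤ (t:ℤ) := Int.ofNat_nonneg t
      have h1 : (t:ℤ) < (n:ℤ) := by exact_mod_cast ht
      rw [abs_of_pos (by omega)]
      omega
    · have h0 : (0:ℤ) ≤ (t:ℤ) := Int.ofNat_nonneg t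
      have h1 : (t:ℤ) < (n:ℤ) := by exact_mod_cast ht
      rw [abs_of_neg (by omega)]
      omega
  · rintro ⟨h1, h2⟩
    rw [jList_eq]
    simp only [List.mem_append, List.mem_map, List.mem_range]
    rcases lt_or_ge 0 j with hj | hj
    · rw [abs_of_pos hj] at h1 h2
      left
      exact ⟨(j - 1).toNat, by omega, by push_cast; omega⟩
    · have hj' : j < 0 := by rw [abs_of_nonpos hj] at h1; omega
      rw [abs_of_neg hj'] at h1 h2
      right
      exact ⟨(j + n).toNat, by omega, by push_cast; omega⟩

lemma ordKey_pos_eq {n : ℕ} {j : ℤ} (h : 0 < j) : ordKey n j = j := if_pos h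
lemma ordKey_neg_eq {n : ℕ} {j : ℤ} (h : j ≤ 0) : ordKey n j = 2 * n + 1 + j :=
  if_neg (by omega)

lemma jList_sorted (n : ℕ) : (jList n).Pairwise fun a b => ordKey n a < ordKey n b := by
  rw [jList_eq]
  apply List.pairwise_append.2
  refine ⟨?_, ?_, ?_⟩
  · rw [List.pairwise_map]
    refine List.Pairwise.imp_of_mem ?_ ((List.pairwise_lt_range (n := n)))
    intro a b _ _ hab
    have h0 : (0:ℤ) ≤ (a:ℤ) := Int.ofNat_nonneg a
    have h1 : (a:ℤ) < (b:ℤ) := by exact_mod_cast hab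
    rw [ordKey_pos_eq (by omega), ordKey_pos_eq (by omega)]
    omega
  · rw [List.pairwise_map]
    refine List.Pairwise.imp_of_mem ?_ ((List.pairwise_lt_range (n := n)))
    intro a b ha hb hab
    have ha' : (a:ℤ) < n := by exact_mod_cast List.mem_range.1 ha
    have hb' : (b:ℤ) < n := by exact_mod_cast List.mem_range.1 hb
    have h1 : (a:ℤ) < (b:ℤ) := by exact_mod_cast hab
    rw [ordKey_neg_eq (by omega), ordKey_neg_eq (by omega)]
    omega
  · intro a ha b hb
    rcases List.mem_map.1 ha with ⟨t, ht, rfl⟩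
    rcases List.mem_map.1 hb with ⟨s, hs, rfl⟩
    have ht' : (t:ℤ) < n := by exact_mod_cast List.mem_range.1 ht
    have hs' : (s:ℤ) < n := by exact_mod_cast List.mem_range.1 hs
    have h0 : (0:ℤ) ≤ (t:ℤ) := Int.ofNat_nonneg t
    have h2 : (0:ℤ) ≤ (s:ℤ) := Int.ofNat_nonneg s
    rw [ordKey_pos_eq (by omega), ordKey_neg_eq (by omega)]
    omega

lemma jList_nodup (n : ℕ) : (jList n).Nodup := by
  have := jList_sorted n
  refine List.Pairwise.imp ?_ this
  intro a b h he
  subst he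
  exact lt_irrefl _ h

lemma mem_Pfin {n : ℕ} {p : ℤ × ℤ} : p ∈ Pfin n ↔ inP n p := by
  constructor
  · exact fun h => (Finset.mem_filter.1 h).2
  · intro h
    apply Finset.mem_filter.2
    refine ⟨List.mem_toFinset.2 ?_, h⟩
    obtain ⟨i, j⟩ := p
    obtain ⟨h1, h2, h3, h4⟩ := h
    simp only at h1 h2 h3 h4
    simp only [posList, List.mem_flatMap, List.mem_map, List.mem_range]
    refine ⟨((i - 1).toNat : ℤ), by simp; omega, j, mem_jList.2 ⟨by omega, h4⟩, ?_⟩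
    have hi : ((i-1).toNat : ℤ) = i - 1 := Int.toNat_of_nonneg (by omega)
    rw [hi]
    ring_nf

/-! ### Row decomposition of `wPerm` -/

/-- the row permutation. -/
def rowP (n : ℕ) (X : Finset (ℤ × ℤ)) (m : ℤ) : Equiv.Perm ℤ :=
  Fp m ((jList n).filter fun j => decide ((m, j) ∈ X))

lemma prod_flatMap_filter {α β : Type*} {M : Type*} [Monoid M] (l : List α)
    (f : α → List β) (p : β → Bool) (g : β → M) :
    (((l.flatMap f).filter p).map g).prod
      = (l.map fun a => ((((f a).filter p).map g).prod)).prod := by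
  induction l with
  | nil => rfl
  | cons a l ih =>
      rw [List.flatMap_cons, List.filter_append, List.map_append, List.prod_append, ih,
        List.map_cons, List.prod_cons]

lemma wPerm_eq_rows (n : ℕ) (X : Finset (ℤ × ℤ)) :
    wPerm n X = ((List.range' 1 n).map fun m : ℕ => rowP n X (m:ℤ)).prod := by
  unfold wPerm
  rw [show posList n =
      (List.range n).flatMap (fun a : ℕ => (jList n).map fun j => (((a:ℕ) : ℤ) + 1, j)) by
        unfold posList; simp [List.flatMap_assoc],
    prod_flatMap_filter]
  rw [List.range'_eq_map_range, List.map_map]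
  congr 1
  apply List.map_congr_left
  intro a _
  show ((((jList n).map fun j => (((a:ℕ):ℤ) + 1, j)).filter _).map fun p => Equiv.swap p.1 p.2).prod
      = rowP n X ((((1:ℕ) + a :ℕ)):ℤ)
  rw [List.filter_map, List.map_map]
  unfold rowP Fp
  have hc : (((1 + a : ℕ)) : ℤ) = ((a:ℕ):ℤ) + 1 := by push_cast; ring
  rw [hc]
  rfl

/-- the filtered row list. -/
def SL (n : ℕ) (X : Finset (ℤ × ℤ)) (m : ℤ) : List ℤ :=
  (jList n).filter fun j => decide (j ≠ m ∧ (m, j) ∈ X)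

lemma rowP_eq_SL (n : ℕ) (X : Finset (ℤ × ℤ)) (m : ℤ) :
    rowP n X m = Fp m (SL n X m) := by
  unfold rowP SL
  rw [Fp_filter_ne, List.filter_filter]
  congr 1
  apply List.filter_congr
  intro a _
  by_cases h1 : (m, a) ∈ X <;> by_cases h2 : a = m <;> simp [h1, h2]

lemma mem_SL {n : ℕ} {X : Finset (ℤ × ℤ)} {m j : ℤ} :
    j ∈ SL n X m ↔ j ∈ jList n ∧ j ≠ m ∧ (m, j) ∈ X := by
  unfold SL
  rw [List.mem_filter]
  simp

lemma SL_nodup (n : ℕ) (X : Finset (ℤ × ℤ)) (m : ℤ) : (SL n X m).Nodup :=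
  (jList_nodup n).filter _

lemma SL_sorted (n : ℕ) (X : Finset (ℤ × ℤ)) (m : ℤ) :
    (SL n X m).Pairwise fun a b => ordKey n a < ordKey n b :=
  (jList_sorted n).filter _

lemma not_mem_SL_self {n : ℕ} {X : Finset (ℤ × ℤ)} {m : ℤ} : m ∉ SL n X m := by
  intro h
  exact (mem_SL.1 h).2.1 rfl

section WithX
variable {n : ℕ} {X : Finset (ℤ × ℤ)} (hX : ∀ p ∈ X, inP n p)

include hX in
/-- row permutations fix small and large values. -/
lemma rowP_fix {m : ℕ} (hm : m ≤ n) {x : ℤ}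
    (hx : |x| < (m:ℤ) ∨ (n:ℤ) < |x|) : rowP n X (m:ℤ) x = x := by
  rw [rowP_eq_SL]
  have hxm : x ≠ (m:ℤ) := by
    intro h
    subst h
    rcases hx with h | h
    · rw [abs_of_nonneg (by positivity)] at h; omega
    · rw [abs_of_nonneg (by positivity)] at h
      have : ((m:ℕ):ℤ) ≤ (n:ℤ) := by exact_mod_cast hm
      omega
  apply Fp_notmem _ hxm
  intro hmem
  obtain ⟨hj, _, hXmem⟩ := mem_SL.1 hmem
  obtain ⟨_, _, h3, h4⟩ := hX _ hXmem
  simp only at h3 h4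
  rcases hx with h | h <;> omega

def Wfrom (n : ℕ) (X : Finset (ℤ × ℤ)) (k : ℕ) : Equiv.Perm ℤ :=
  ((List.range' k (n + 1 - k)).map fun m : ℕ => rowP n X (m:ℤ)).prod

lemma Wfrom_gt {k : ℕ} (h : n < k) : Wfrom n X k = 1 := by
  unfold Wfrom
  have : n + 1 - k = 0 := by omega
  rw [this]
  rfl

lemma Wfrom_succ {k : ℕ} (h : k ≤ n) :
    Wfrom n X k = rowP n X (k:ℤ) * Wfrom n X (k+1) := by
  unfold Wfrom
  have h1 : n + 1 - k = (n - k) + 1 := by omega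
  have h2 : n + 1 - (k + 1) = n - k := by omega
  rw [h1, h2, List.range'_succ, List.map_cons, List.prod_cons]

lemma wPerm_eq_Wfrom : wPerm n X = Wfrom n X 1 := by
  rw [wPerm_eq_rows]
  unfold Wfrom
  norm_num

include hX in
lemma Wfrom_fix : ∀ l k, n + 1 - k = l → ∀ x : ℤ,
    (|x| < (k:ℤ) ∨ (n:ℤ) < |x|) → Wfrom n X k x = x := by
  intro l
  induction l with
  | zero =>
      intro k hk x _
      rw [Wfrom_gt (by omega)]
      rfl
  | succ l ih =>
      intro k hk x hx
      have hkn : k ≤ n := by omega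
      have hx' : |x| < ((k+1:ℕ):ℤ) ∨ (n:ℤ) < |x| := by
        rcases hx with h | h
        · left; push_cast; omega
        · right; exact h
      rw [Wfrom_succ hkn, Equiv.Perm.mul_apply, ih (k+1) (by omega) x hx']
      exact rowP_fix hX hkn hx

include hX in
lemma Wfrom_fix' {k : ℕ} {x : ℤ} (hx : |x| < (k:ℤ) ∨ (n:ℤ) < |x|) :
    Wfrom n X k x = x := Wfrom_fix hX _ k rfl x hx

end WithX

section L1
variable {n : ℕ} {O : Finset (ℤ × ℤ)} (hO : ∀ p ∈ O, inP n p)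
    (hB : ∀ p ∈ O, p.2 ≠ -p.1)

include hO hB in
/-- The key bound: the inverse of the `O`-tail product does not increase `|·|`
on negative inputs. -/
lemma L1 : ∀ l k, n + 1 - k = l → 1 ≤ k → ∀ j : ℤ, j < 0 → (k:ℤ) ≤ -j → -j ≤ (n:ℤ) →
    |(Wfrom n O k)⁻¹ j| ≤ -j := by
  intro l
  induction l with
  | zero =>
      intro k hk _ j _ h1 h2
      have : ((k:ℕ):ℤ) ≥ (n:ℤ) + 1 := by exact_mod_cast by omega
      omega
  | succ l ih =>
      intro k hk hk1 j hj h1 h2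
      have hkn : k ≤ n := by omega
      rw [Wfrom_succ hkn, mul_inv_rev, Equiv.Perm.mul_apply]
      set y := (rowP n O (k:ℤ))⁻¹ j with hy
      have hrow : rowP n O (k:ℤ) y = j := by
        rw [hy]; exact Equiv.Perm.apply_inv_self _ _
      by_cases hmem : j ∈ SL n O (k:ℤ)
      · -- j is in the O-row; y is k or a larger (more negative) element
        have hrow' : Fp (k:ℤ) (SL n O (k:ℤ)) y = j := by
          rw [← rowP_eq_SL]; exact hrow
        have hyne : y = (k:ℤ) ∨ (y ∈ SL n O (k:ℤ) ∧ ordKey n j < ordKey n y) := by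
          by_cases hycase : y ∈ SL n O (k:ℤ)
          · rcases Fp_back (ordKey n) not_mem_SL_self (SL_nodup n O _) (SL_sorted n O _)
              hycase with h | ⟨hm, hlt⟩
            · exfalso
              rw [hrow'] at h
              have : (0:ℤ) < (k:ℤ) := by exact_mod_cast hk1
              omega
            · rw [hrow'] at hlt
              exact Or.inr ⟨hycase, hlt⟩
          · by_cases hyk : y = (k:ℤ)
            · exact Or.inl hyk
            · exfalso
              rw [Fp_notmem hycase hyk] at hrow'
              exact hycase (hrow' ▸ hmem)
        rcases hyne with hcase | ⟨hySL, hlt⟩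
        · rw [hcase]
          have hfix : Wfrom n O (k+1) (k:ℤ) = (k:ℤ) := by
            apply Wfrom_fix' hO
            left
            rw [abs_of_nonneg (by positivity)]
            push_cast; omega
          rw [perm_inv_fix hfix, abs_of_nonneg (by positivity)]
          exact h1
        · obtain ⟨hyj, hynek, hyO⟩ := mem_SL.1 hySL
          obtain ⟨_, _, h3, h4⟩ := hO _ hyO
          simp only at h3 h4
          have hyneg : y < 0 := by
            by_contra hpos
            push_neg at hpos
            have hy0 : 0 < y := by
              rcases lt_or_eq_of_le hpos with h | h
              · exact h
              · exfalso; rw [← h] at h3; simp at h3; omega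
            rw [ordKey_pos_eq hy0, ordKey_neg_eq (by omega)] at hlt
            rw [abs_of_pos hy0] at h4
            omega
          have hygt : y > j := by
            rw [ordKey_neg_eq (by omega), ordKey_neg_eq (by omega)] at hlt
            omega
          have hynk : y ≠ -(k:ℤ) := by
            have := hB _ hyO
            simpa using this
          have habs : (k:ℤ) ≤ -y := by
            rw [abs_of_neg hyneg] at h3; omega
          have hstep : |(Wfrom n O (k+1))⁻¹ y| ≤ -y := by
            apply ih (k+1) (by omega) (by omega) y hyneg ?_ ?_
            · push_cast; omega
            · rw [abs_of_neg hyneg] at h4; omega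
          omega
      · -- j not in the row: fixed
        have hrfix : rowP n O (k:ℤ) j = j := by
          rw [rowP_eq_SL]
          exact Fp_notmem hmem (by omega)
        have hyj : y = j := by rw [hy]; exact perm_inv_fix hrfix
        rw [hyj]
        by_cases hcase : ((k:ℕ):ℤ) = -j
        · have hfix : Wfrom n O (k+1) j = j := by
            apply Wfrom_fix' hO
            left
            rw [abs_of_neg hj]
            push_cast; omega
          rw [perm_inv_fix hfix, abs_of_neg hj]
        · have : ((k:ℕ):ℤ) + 1 ≤ -j := by omega
          apply ih (k+1) (by omega) (by omega) j hj (by push_cast; omega) h2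

end L1
end Stmt15Aux

namespace Stmt15Aux

section Main
variable {n : ℕ} {O J : Finset (ℤ × ℤ)}
variable (hO : O ⊆ Pfin n) (hB : ∀ p ∈ O, p.2 ≠ -p.1) (hJ : IsIdeal n J)

include hJ in
lemma hM' : ∀ p ∈ MO n O J, inP n p := by
  intro p hp
  rcases Finset.mem_union.1 hp with h | h
  · exact hJ.1 _ (Finset.mem_inter.1 h).1
  · exact hJ.1 _ (Finset.mem_filter.1 h).1

/-! ### Row analysis: the lists `S`, `R`, `T` for row `m` -/

/-- row elements of `O` that are already in `J` -/
def Sl (n : ℕ) (O J : Finset (ℤ × ℤ)) (m : ℤ) : List ℤ :=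
  (jList n).filter fun j =>
    decide (j ≠ m ∧ (m, j) ∈ O) && decide ((m, j) ∈ O ∧ (m, j) ∈ J)

/-- row elements of `O` not in `J` -/
def Rl (n : ℕ) (O J : Finset (ℤ × ℤ)) (m : ℤ) : List ℤ :=
  (jList n).filter fun j =>
    decide (j ≠ m ∧ (m, j) ∈ O) && !(decide ((m, j) ∈ O ∧ (m, j) ∈ J))

/-- row elements of `M` not in `O ∩ J` -/
def Tl (n : ℕ) (O J : Finset (ℤ × ℤ)) (m : ℤ) : List ℤ :=
  (jList n).filter fun j =>
    decide (j ≠ m ∧ (m, j) ∈ MO n O J) && !(decide ((m, j) ∈ O ∧ (m, j) ∈ J))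

include hO hJ in
lemma SL_O_split (m : ℤ) :
    SL n O m = Sl n O J m ++ Rl n O J m := by
  unfold SL Sl Rl
  apply filter_split (ordKey n)
  · exact jList_sorted n
  · intro a b _ _ pa _ hk qb
    rw [decide_eq_true_eq] at pa qb ⊢
    refine ⟨pa.2, ?_⟩
    exact hJ.2 _ qb.2 _ (hO pa.2) ⟨le_refl _, le_of_lt hk⟩

include hJ in
lemma SL_M_split (m : ℤ) :
    SL n (MO n O J) m =
      ((jList n).filter fun j =>
        decide (j ≠ m ∧ (m, j) ∈ MO n O J) && decide ((m, j) ∈ O ∧ (m, j) ∈ J))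
        ++ Tl n O J m := by
  unfold SL Tl
  apply filter_split (ordKey n)
  · exact jList_sorted n
  · intro a b _ _ pa _ hk qb
    rw [decide_eq_true_eq] at pa qb ⊢
    rcases Finset.mem_union.1 pa.2 with h | h
    · have h' := Finset.mem_inter.1 h
      exact ⟨h'.2, h'.1⟩
    · exfalso
      have h' := Finset.mem_filter.1 h
      have heq := h'.2 _ qb.2 ⟨le_refl _, le_of_lt hk⟩
      have hab : b = a := congrArg Prod.snd heq
      subst hab
      exact lt_irrefl _ hk

lemma Sl_eq_M (m : ℤ) :
    ((jList n).filter fun j =>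
      decide (j ≠ m ∧ (m, j) ∈ MO n O J) && decide ((m, j) ∈ O ∧ (m, j) ∈ J))
      = Sl n O J m := by
  unfold Sl
  apply List.filter_congr
  intro a _
  by_cases h1 : a = m <;> by_cases h2 : (m, a) ∈ O <;> by_cases h3 : (m, a) ∈ J <;>
    simp [h1, h2, h3, MO, Finset.mem_union, Finset.mem_inter]

include hO hJ in
lemma SL_M_eq (m : ℤ) :
    SL n (MO n O J) m = Sl n O J m ++ Tl n O J m := by
  rw [SL_M_split hJ m, Sl_eq_M]

lemma mem_Sl {m z : ℤ} :
    z ∈ Sl n O J m ↔ z ∈ jList n ∧ z ≠ m ∧ (m, z) ∈ O ∧ (m, z) ∈ J := by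
  unfold Sl
  rw [List.mem_filter]
  simp only [Bool.and_eq_true, decide_eq_true_eq]
  tauto

lemma mem_Rl {m z : ℤ} :
    z ∈ Rl n O J m ↔ z ∈ jList n ∧ z ≠ m ∧ (m, z) ∈ O ∧ (m, z) ∉ J := by
  unfold Rl
  rw [List.mem_filter]
  simp only [Bool.and_eq_true, decide_eq_true_eq, Bool.not_eq_true', decide_eq_false_iff_not]
  tauto

lemma mem_Tl {m z : ℤ} :
    z ∈ Tl n O J m ↔
      z ∈ jList n ∧ z ≠ m ∧ (m, z) ∈ MO n O J ∧ ¬ ((m, z) ∈ O ∧ (m, z) ∈ J) := by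
  unfold Tl
  rw [List.mem_filter]
  simp only [Bool.and_eq_true, decide_eq_true_eq, Bool.not_eq_true', decide_eq_false_iff_not]
  tauto

lemma Tl_maxPrec {m z : ℤ} (h : z ∈ Tl n O J m) :
    (m, z) ∈ maxPrec n J ∧ (m, z) ∉ O := by
  obtain ⟨_, _, hM, hnq⟩ := mem_Tl.1 h
  rcases Finset.mem_union.1 hM with hin | hmax
  · exact absurd ⟨(Finset.mem_inter.1 hin).2, (Finset.mem_inter.1 hin).1⟩ hnq
  · refine ⟨hmax, fun hOmem => ?_⟩
    exact hnq ⟨hOmem, (Finset.mem_filter.1 hmax).1⟩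

/-- the row correction permutation. -/
def gP (n : ℕ) (O J : Finset (ℤ × ℤ)) (m : ℤ) : Equiv.Perm ℤ :=
  (rowP n O m)⁻¹ * rowP n (MO n O J) m

include hO hJ in
lemma gP_fix {m x : ℤ} (hx1 : x ≠ m) (hx2 : x ∉ Rl n O J m) (hx3 : x ∉ Tl n O J m) :
    gP n O J m x = x := by
  unfold gP
  rw [Equiv.Perm.mul_apply]
  have key : rowP n (MO n O J) m x = rowP n O m x := by
    rw [rowP_eq_SL, rowP_eq_SL, SL_M_eq hO hJ, SL_O_split hO hJ]
    by_cases hxS : x ∈ Sl n O J m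
    · rw [Fp_append, Fp_append, Equiv.Perm.mul_apply, Equiv.Perm.mul_apply,
        Fp_notmem hx3 hx1, Fp_notmem hx2 hx1]
    · have hnotM : x ∉ Sl n O J m ++ Tl n O J m := by
        intro h
        rcases List.mem_append.1 h with h | h
        exacts [hxS h, hx3 h]
      have hnotO : x ∉ Sl n O J m ++ Rl n O J m := by
        intro h
        rcases List.mem_append.1 h with h | h
        exacts [hxS h, hx2 h]
      rw [Fp_notmem hnotM hx1, Fp_notmem hnotO hx1]
  rw [key]
  exact Equiv.Perm.inv_apply_self _ _

/-! ### The case `m ∈ D` -/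

section Dcase
variable {m : ℕ} (hm1 : 1 ≤ m) (hmn : m ≤ n) (hmD : (((m:ℤ), -(m:ℤ)) : ℤ × ℤ) ∈ J)

include hO hJ hm1 hmn hmD in
lemma Rl_nil : Rl n O J (m:ℤ) = [] := by
  have hmz : (0:ℤ) < (m:ℤ) := by exact_mod_cast hm1
  have hmn' : ((m:ℕ):ℤ) ≤ (n:ℤ) := by exact_mod_cast hmn
  rcases List.eq_nil_or_concat (Rl n O J (m:ℤ)) with h | ⟨L, z, h⟩
  · exact h
  · exfalso
    have hz : z ∈ Rl n O J (m:ℤ) := by rw [h]; simp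
    obtain ⟨hzj, hzm, hzO, hzJ⟩ := mem_Rl.1 hz
    obtain ⟨_, _, h3, h4⟩ := mem_Pfin.1 (hO hzO)
    simp only at h3 h4
    apply hzJ
    apply hJ.2 _ hmD _ (hO hzO)
    refine ⟨le_refl _, ?_⟩
    show ordKey n z ≤ ordKey n (-(m:ℤ))
    rw [ordKey_neg_eq (show -(m:ℤ) ≤ 0 by omega)]
    rcases lt_or_ge 0 z with hz0 | hz0
    · rw [ordKey_pos_eq hz0]
      rw [abs_of_pos hz0] at h4
      omega
    · rw [ordKey_neg_eq hz0]
      rw [abs_of_nonpos hz0] at h3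
      omega

include hJ hm1 hmn hmD in
lemma neg_m_maximal : (((m:ℤ), -(m:ℤ)) : ℤ × ℤ) ∈ maxPrec n J := by
  apply Finset.mem_filter.2
  refine ⟨hmD, ?_⟩
  rintro ⟨i, j⟩ hq ⟨hle1, hle2⟩
  simp only at hle1 hle2
  obtain ⟨g1, g2, g3, g4⟩ := hJ.1 _ hq
  simp only at g1 g2 g3 g4
  have hmz : (0:ℤ) < (m:ℤ) := by exact_mod_cast hm1
  have hmn' : ((m:ℕ):ℤ) ≤ (n:ℤ) := by exact_mod_cast hmn
  rw [ordKey_neg_eq (by omega)] at hle2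
  have hjneg : j < 0 := by
    by_contra hpos
    push_neg at hpos
    have hj0 : 0 < j := by
      rcases lt_or_eq_of_le hpos with hlt | heq
      · exact hlt
      · exfalso; rw [← heq] at g3; simp at g3; omega
    rw [ordKey_pos_eq hj0] at hle2
    rw [abs_of_pos hj0] at g4
    omega
  rw [ordKey_neg_eq (by omega)] at hle2
  rw [abs_of_neg hjneg] at g3 g4
  have hh : i = (m:ℤ) ∧ j = -(m:ℤ) := by constructor <;> omega
  rw [Prod.ext_iff]
  exact ⟨hh.1, hh.2⟩

include hO hB hJ hm1 hmn hmD in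
lemma Tl_singleton : Tl n O J (m:ℤ) = [-(m:ℤ)] := by
  have hmz : (0:ℤ) < (m:ℤ) := by exact_mod_cast hm1
  have hmn' : ((m:ℕ):ℤ) ≤ (n:ℤ) := by exact_mod_cast hmn
  unfold Tl
  apply filter_eq_singleton (jList_nodup n)
  · apply mem_jList.2
    rw [abs_of_neg (by omega)]
    constructor <;> omega
  · intro x hx
    rw [Bool.and_eq_true, decide_eq_true_eq, Bool.not_eq_true', decide_eq_false_iff_not]
    constructor
    · rintro ⟨⟨hxm, hxM⟩, hnq⟩
      have hmax : ((m:ℤ), x) ∈ maxPrec n J ∧ ((m:ℤ), x) ∉ O := by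
        rcases Finset.mem_union.1 hxM with hin | hmax
        · exact absurd ⟨(Finset.mem_inter.1 hin).2, (Finset.mem_inter.1 hin).1⟩ hnq
        · exact ⟨hmax, fun hOmem => hnq ⟨hOmem, (Finset.mem_filter.1 hmax).1⟩⟩
      have hxJ : ((m:ℤ), x) ∈ J := (Finset.mem_filter.1 hmax.1).1
      obtain ⟨_, _, h3, h4⟩ := hJ.1 _ hxJ
      simp only at h3 h4
      have hple : ple n ((m:ℤ), x) ((m:ℤ), -(m:ℤ)) := by
        refine ⟨le_refl _, ?_⟩
        show ordKey n x ≤ ordKey n (-(m:ℤ))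
        rw [ordKey_neg_eq (show -(m:ℤ) ≤ 0 by omega)]
        rcases lt_or_ge 0 x with hx0 | hx0
        · rw [ordKey_pos_eq hx0]
          rw [abs_of_pos hx0] at h4
          omega
        · rw [ordKey_neg_eq hx0]
          rw [abs_of_nonpos hx0] at h3
          omega
      have heq := (Finset.mem_filter.1 hmax.1).2 _ hmD hple
      exact (congrArg Prod.snd heq).symm
    · rintro rfl
      refine ⟨⟨by omega, ?_⟩, ?_⟩
      · exact Finset.mem_union.2 (Or.inr (neg_m_maximal hJ hm1 hmn hmD))
      · rintro ⟨hOm, _⟩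
        exact (hB _ hOm) rfl

include hO hB hJ hm1 hmn hmD in
lemma gP_D_apply : gP n O J (m:ℤ) (m:ℤ) = -(m:ℤ) := by
  have hmz : (0:ℤ) < (m:ℤ) := by exact_mod_cast hm1
  unfold gP
  rw [Equiv.Perm.mul_apply]
  have h1 : rowP n (MO n O J) (m:ℤ) (m:ℤ) = -(m:ℤ) := by
    rw [rowP_eq_SL, SL_M_eq hO hJ, Tl_singleton hO hB hJ hm1 hmn hmD]
    apply Fp_last
    · intro hmem
      exact hB _ (mem_Sl.1 hmem).2.2.1 rfl
    · omega
  rw [h1]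
  apply perm_inv_fix
  rw [rowP_eq_SL]
  apply Fp_notmem _ (by omega)
  intro hmem
  exact hB _ (mem_SL.1 hmem).2.2 rfl

include hO hB hJ hm1 hmn hmD in
lemma gP_D_fix {x : ℤ} (hx1 : x ≠ (m:ℤ)) (hx2 : x ≠ -(m:ℤ)) : gP n O J (m:ℤ) x = x := by
  apply gP_fix hO hJ hx1
  · rw [Rl_nil hO hJ hm1 hmn hmD]; exact List.not_mem_nil
  · rw [Tl_singleton hO hB hJ hm1 hmn hmD]
    simp [hx2]

include hO hB hJ hm1 hmn hmD in
lemma gP_D_apply' : gP n O J (m:ℤ) (-(m:ℤ)) = (m:ℤ) := by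
  have hmz : (0:ℤ) < (m:ℤ) := by exact_mod_cast hm1
  have hg := gP_D_apply hO hB hJ hm1 hmn hmD
  by_contra hne
  have h1 : gP n O J (m:ℤ) (-(m:ℤ)) ≠ -(m:ℤ) := by
    intro h
    have := (gP n O J (m:ℤ)).injective (hg.trans h.symm)
    omega
  have h2 := gP_D_fix hO hB hJ hm1 hmn hmD (x := gP n O J (m:ℤ) (-(m:ℤ))) hne h1
  exact h1 ((gP n O J (m:ℤ)).injective h2)

end Dcase

/-! ### The case `m ∉ D`: bounds on `R` and `T` elements -/

section NDcase
variable {m : ℕ} (hm1 : 1 ≤ m) (hmn : m ≤ n)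
variable {i : ℤ} (hi1 : (m:ℤ) < i) (hi2 : i ≤ (n:ℤ)) (hiJ : ((i, -i) : ℤ × ℤ) ∈ J)
variable (hmD' : (((m:ℤ), -(m:ℤ)) : ℤ × ℤ) ∉ J)

include hO hB hJ hm1 hmn hi1 hi2 hiJ hmD' in
lemma RT_bound {z : ℤ} (hz : z ∈ Rl n O J (m:ℤ) ∨ z ∈ Tl n O J (m:ℤ)) :
    z < 0 ∧ (m:ℤ) + 1 ≤ -z ∧ -z < i ∧ -z ≤ (n:ℤ) := by
  have hmz : (0:ℤ) < (m:ℤ) := by exact_mod_cast hm1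
  have hmn' : ((m:ℕ):ℤ) ≤ (n:ℤ) := by exact_mod_cast hmn
  have hiord : ordKey n (-i) = 2 * n + 1 + (-i) := ordKey_neg_eq (by omega)
  obtain ⟨hinP, hznm, hkey⟩ :
      inP n ((m:ℤ), z) ∧ z ≠ -(m:ℤ) ∧ ¬ (ordKey n z ≤ ordKey n (-i)) := by
    rcases hz with hz | hz
    · obtain ⟨hzj, hzm, hzO, hzJ⟩ := mem_Rl.1 hz
      refine ⟨mem_Pfin.1 (hO hzO), fun he => hB _ hzO (by simpa using he), fun hle => ?_⟩
      exact hzJ (hJ.2 _ hiJ _ (hO hzO) ⟨by omega, hle⟩)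
    · obtain ⟨hmax, hnO⟩ := Tl_maxPrec hz
      have hzJ : ((m:ℤ), z) ∈ J := (Finset.mem_filter.1 hmax).1
      refine ⟨hJ.1 _ hzJ, fun he => ?_, fun hle => ?_⟩
      · exact hmD' (he ▸ hzJ)
      · have heqp := (Finset.mem_filter.1 hmax).2 _ hiJ ⟨by omega, hle⟩
        have him : i = (m:ℤ) := congrArg Prod.fst heqp
        omega
  obtain ⟨_, _, h3, h4⟩ := hinP
  simp only at h3 h4
  rw [hiord] at hkey
  have hzneg : z < 0 := by
    by_contra hpos
    push_neg at hpos
    have hz0 : 0 < z := by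
      rcases lt_or_eq_of_le hpos with hlt | heq
      · exact hlt
      · exfalso; rw [← heq] at h3; simp at h3; omega
    rw [ordKey_pos_eq hz0] at hkey
    rw [abs_of_pos hz0] at h4
    omega
  rw [ordKey_neg_eq (by omega)] at hkey
  rw [abs_of_neg hzneg] at h3 h4
  exact ⟨hzneg, by omega, by omega, h4⟩

end NDcase
end Main
end Stmt15Aux

namespace Stmt15Aux
section Final
variable {n : ℕ} {O J : Finset (ℤ × ℤ)}
variable (hO : O ⊆ Pfin n) (hB : ∀ p ∈ O, p.2 ≠ -p.1) (hJ : IsIdeal n J)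

/-- the partial products of `w^{O,J}` over rows `≥ k`. -/
def WOJk (n : ℕ) (O J : Finset (ℤ × ℤ)) (k : ℕ) : Equiv.Perm ℤ :=
  (Wfrom n O k)⁻¹ * Wfrom n (MO n O J) k

include hO hJ in
lemma WOJk_fix {k : ℕ} {x : ℤ} (hx : |x| < (k:ℤ) ∨ (n:ℤ) < |x|) : WOJk n O J k x = x := by
  unfold WOJk
  rw [Equiv.Perm.mul_apply, Wfrom_fix' (hM' hJ) hx,
    perm_inv_fix (Wfrom_fix' (fun p hp => mem_Pfin.1 (hO hp)) hx)]

lemma WOJk_step {k : ℕ} (hkn : k ≤ n) :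
    WOJk n O J k =
      ((Wfrom n O (k+1))⁻¹ * gP n O J (k:ℤ) * ((Wfrom n O (k+1))⁻¹)⁻¹) * WOJk n O J (k+1) := by
  unfold WOJk gP
  rw [Wfrom_succ (X := O) hkn, Wfrom_succ (X := MO n O J) hkn]
  group

include hO hB hJ in
lemma main_inv : ∀ l k, n + 1 - k = l → 1 ≤ k →
    ∀ i : ℤ, (k:ℤ) ≤ i → i ≤ (n:ℤ) → ((i, -i) : ℤ × ℤ) ∈ J →
      WOJk n O J k i = -i ∧ WOJk n O J k (-i) = i ∧
        ∀ x : ℤ, |x| < i → |WOJk n O J k x| < i := by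
  have hO' : ∀ p ∈ O, inP n p := fun p hp => mem_Pfin.1 (hO hp)
  intro l
  induction l with
  | zero =>
      intro k hk _ i hki hin _
      exfalso
      have : (n:ℤ) + 1 ≤ (k:ℤ) := by exact_mod_cast by omega
      omega
  | succ l ih =>
      intro k hk hk1 i hki hin hiJ
      have hkn : k ≤ n := by omega
      have hkz : (0:ℤ) < (k:ℤ) := by exact_mod_cast hk1
      have hknz : ((k:ℕ):ℤ) ≤ (n:ℤ) := by exact_mod_cast hkn
      set ρ : Equiv.Perm ℤ := (Wfrom n O (k+1))⁻¹ with hρ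
      have hρf : ∀ x : ℤ, (|x| < (k:ℤ)+1 ∨ (n:ℤ) < |x|) → ρ x = x := by
        intro x hx
        apply perm_inv_fix
        apply Wfrom_fix' hO'
        rcases hx with h | h
        · left; push_cast; omega
        · right; exact h
      have hρf' : ∀ x : ℤ, (|x| < (k:ℤ)+1 ∨ (n:ℤ) < |x|) → ρ⁻¹ x = x := by
        intro x hx
        rw [hρ, inv_inv]
        apply Wfrom_fix' hO'
        rcases hx with h | h
        · left; push_cast; omega
        · right; exact h
      have hstep := WOJk_step (O := O) (J := J) hkn
      set C : Equiv.Perm ℤ := ρ * gP n O J (k:ℤ) * ρ⁻¹ with hC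
      have happ : ∀ x : ℤ, WOJk n O J k x = C (WOJk n O J (k+1) x) := by
        intro x
        rw [hstep]
        simp [Equiv.Perm.mul_apply]
      by_cases hD : (((k:ℤ), -(k:ℤ)) : ℤ × ℤ) ∈ J
      · -- row k belongs to D
        have hCfix : ∀ x : ℤ, x ≠ (k:ℤ) → x ≠ -(k:ℤ) → C x = x := by
          intro x h1 h2
          have hz1 : ρ⁻¹ x ≠ (k:ℤ) := by
            intro h
            apply h1
            rw [← Equiv.Perm.apply_inv_self ρ x, h]
            exact hρf _ (by left; rw [abs_of_pos hkz]; omega)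
          have hz2 : ρ⁻¹ x ≠ -(k:ℤ) := by
            intro h
            apply h2
            rw [← Equiv.Perm.apply_inv_self ρ x, h]
            exact hρf _ (by left; rw [abs_of_neg (by omega)]; omega)
          rw [hC]
          simp only [Equiv.Perm.mul_apply]
          rw [gP_D_fix hO hB hJ hk1 hkn hD hz1 hz2]
          exact Equiv.Perm.apply_inv_self ρ x
        have hCk : C (k:ℤ) = -(k:ℤ) := by
          rw [hC]
          simp only [Equiv.Perm.mul_apply]
          rw [hρf' _ (by left; rw [abs_of_pos hkz]; omega),
            gP_D_apply hO hB hJ hk1 hkn hD]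
          exact hρf _ (by left; rw [abs_of_neg (by omega)]; omega)
        have hCk' : C (-(k:ℤ)) = (k:ℤ) := by
          rw [hC]
          simp only [Equiv.Perm.mul_apply]
          rw [hρf' _ (by left; rw [abs_of_neg (by omega)]; omega),
            gP_D_apply' hO hB hJ hk1 hkn hD]
          exact hρf _ (by left; rw [abs_of_pos hkz]; omega)
        rcases eq_or_lt_of_le hki with heq | hlt
        · -- i = k
          have hik : i = (k:ℤ) := heq.symm
          subst hik
          refine ⟨?_, ?_, ?_⟩
          · rw [happ, WOJk_fix hO hJ (by left; rw [abs_of_pos hkz]; push_cast; omega), hCk]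
          · rw [happ, WOJk_fix hO hJ (by left; rw [abs_of_neg (by omega)]; push_cast; omega),
              hCk']
          · intro x hx
            rw [happ, WOJk_fix hO hJ (by left; push_cast; omega),
              hCfix x (by intro h; rw [h, abs_of_pos hkz] at hx; omega)
                (by intro h; rw [h, abs_of_neg (by omega)] at hx; omega)]
            exact hx
        · -- k < i
          obtain ⟨e1, e2, e3⟩ := ih (k+1) (by omega) (by omega) i (by push_cast; omega) hin hiJ
          refine ⟨?_, ?_, ?_⟩
          · rw [happ, e1]
            exact hCfix _ (by omega) (by omega)
          · rw [happ, e2]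
            exact hCfix _ (by omega) (by omega)
          · intro x hx
            rw [happ]
            have hy := e3 x hx
            by_cases hy1 : WOJk n O J (k+1) x = (k:ℤ)
            · rw [hy1, hCk, abs_of_neg (by omega)]
              omega
            · by_cases hy2 : WOJk n O J (k+1) x = -(k:ℤ)
              · rw [hy2, hCk', abs_of_pos hkz]
                omega
              · rw [hCfix _ hy1 hy2]
                exact hy
      · -- row k not in D
        have hki' : (k:ℤ) < i := by
          rcases eq_or_lt_of_le hki with heq | hlt
          · exfalso; apply hD; rw [heq]; exact hiJ
          · exact hlt
        have hbound : ∀ z : ℤ,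
            (z = (k:ℤ) ∨ z ∈ Rl n O J (k:ℤ) ∨ z ∈ Tl n O J (k:ℤ)) → |ρ z| < i := by
          rintro z (rfl | hz)
          · rw [hρf _ (by left; rw [abs_of_pos hkz]; omega), abs_of_pos hkz]
            omega
          · obtain ⟨hz1, hz2, hz3, hz4⟩ := RT_bound hO hB hJ hk1 hkn hki' hin hiJ hD hz
            have hL := L1 hO' hB (n + 1 - (k+1)) (k+1) rfl (by omega) z hz1 (by push_cast; omega) hz4
            rw [← hρ] at hL
            omega
        have hgfix : ∀ x : ℤ,
            ¬ (x = (k:ℤ) ∨ x ∈ Rl n O J (k:ℤ) ∨ x ∈ Tl n O J (k:ℤ)) → gP n O J (k:ℤ) x = x := by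
          intro x hx
          push_neg at hx
          exact gP_fix hO hJ hx.1 hx.2.1 hx.2.2
        have hCbound : ∀ y : ℤ, C y = y ∨ (|y| < i ∧ |C y| < i) := by
          intro y
          rcases conj_fix_or ρ (gP n O J (k:ℤ)) hgfix y with h | ⟨⟨x, hsx, hyx⟩, ⟨x', hsx', hCy⟩⟩
          · left; rw [hC]; exact h
          · right
            constructor
            · rw [hyx]; exact hbound _ hsx
            · rw [hC, hCy]; exact hbound _ hsx'
        obtain ⟨e1, e2, e3⟩ := ih (k+1) (by omega) (by omega) i (by push_cast; omega) hin hiJ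
        refine ⟨?_, ?_, ?_⟩
        · rw [happ, e1]
          rcases hCbound (-i) with h | ⟨h1, _⟩
          · exact h
          · exfalso; rw [abs_of_neg (by omega)] at h1; omega
        · rw [happ, e2]
          rcases hCbound i with h | ⟨h1, _⟩
          · exact h
          · exfalso; rw [abs_of_pos (by omega)] at h1; omega
        · intro x hx
          rw [happ]
          rcases hCbound (WOJk n O J (k+1) x) with h | ⟨_, h2⟩
          · rw [h]; exact e3 x hx
          · exact h2

end Final
end Stmt15Aux


/-- Let `D = {i : (i,−i) ∈ J}`. Then `w^{O,J}(i) = −i` for `i ∈ D`, and for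
`i₁ < i < i₂` with `i₁, i₂ ∈ D ∪ {0, n+1}` one has `i₁ < |w^{O,J}(i)| < i₂`. -/
theorem stmt15 (n : ℕ) (O J : Finset (ℤ × ℤ)) (hA : Aset n ⊆ O) (hO : O ⊆ Pfin n)
    (hB : ∀ p ∈ O, p.2 ≠ -p.1) (hJ : IsIdeal n J) :
    (∀ i : ℤ, ((i, -i) : ℤ × ℤ) ∈ J → wOJ n O J i = -i) ∧
    (∀ i₁ i i₂ : ℤ, 1 ≤ i → i ≤ (n : ℤ) → i₁ < i → i < i₂ →
      (i₁ = 0 ∨ ((i₁, -i₁) : ℤ × ℤ) ∈ J) → (i₂ = (n : ℤ) + 1 ∨ ((i₂, -i₂) : ℤ × ℤ) ∈ J) →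
      i₁ < |wOJ n O J i| ∧ |wOJ n O J i| < i₂) := by
  classical
  open Stmt15Aux in
  have hW : wOJ n O J = Stmt15Aux.WOJk n O J 1 := by
    unfold wOJ Stmt15Aux.WOJk
    rw [Stmt15Aux.wPerm_eq_Wfrom, Stmt15Aux.wPerm_eq_Wfrom]
  have hbnd : ∀ i : ℤ, ((i, -i) : ℤ × ℤ) ∈ J → 1 ≤ i ∧ i ≤ (n:ℤ) := by
    intro i hi
    obtain ⟨h1, h2, h3, h4⟩ := hJ.1 _ hi
    simp only at h1 h2 h3 h4
    exact ⟨h1, h2⟩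
  have main : ∀ i : ℤ, 1 ≤ i → i ≤ (n:ℤ) → ((i, -i) : ℤ × ℤ) ∈ J →
      Stmt15Aux.WOJk n O J 1 i = -i ∧ Stmt15Aux.WOJk n O J 1 (-i) = i ∧
        ∀ x : ℤ, |x| < i → |Stmt15Aux.WOJk n O J 1 x| < i := by
    intro i h1 h2 h3
    exact Stmt15Aux.main_inv hO hB hJ n 1 rfl (le_refl 1) i (by exact_mod_cast h1) h2 h3
  have Wfix : ∀ x : ℤ, (|x| < (1:ℤ) ∨ (n:ℤ) < |x|) → Stmt15Aux.WOJk n O J 1 x = x := by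
    intro x hx
    apply Stmt15Aux.WOJk_fix hO hJ
    rcases hx with h | h
    · left; exact_mod_cast h
    · right; exact h
  constructor
  · intro i hi
    obtain ⟨h1, h2⟩ := hbnd i hi
    rw [hW]
    exact (main i h1 h2 hi).1
  · intro i₁ i i₂ h1i hin hlt1 hlt2 hc1 hc2
    rw [hW]
    set W := Stmt15Aux.WOJk n O J 1 with hWdef
    constructor
    · -- lower bound
      rcases hc1 with rfl | hc1
      · have hWne : W i ≠ 0 := by
          intro h
          have h0 : W 0 = 0 := Wfix 0 (by norm_num)
          have := W.injective (h.trans h0.symm)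
          omega
        exact abs_pos.2 hWne
      · obtain ⟨hb1, hb2⟩ := hbnd i₁ hc1
        obtain ⟨e1, e2, e3⟩ := main i₁ hb1 hb2 hc1
        rcases lt_trichotomy |W i| i₁ with h | h | h
        · exfalso
          have := Stmt15Aux.preserve_rev W i₁ e3 h
          rw [abs_of_pos (by omega)] at this
          omega
        · exfalso
          have habs : W i = i₁ ∨ W i = -i₁ := by
            rcases abs_cases (W i) with ⟨ha, _⟩ | ⟨ha, _⟩
            · left; omega
            · right; omega
          rcases habs with hcase | hcase
          · have : i = -i₁ := W.injective (hcase.trans e2.symm)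
            omega
          · have : i = i₁ := W.injective (hcase.trans e1.symm)
            omega
        · exact h
    · -- upper bound
      rcases hc2 with rfl | hc2
      · by_contra hcon
        push_neg at hcon
        have hgt : (n:ℤ) < |W i| := by omega
        have hfix := Wfix (W i) (Or.inr hgt)
        have : W i = i := W.injective hfix
        rw [this, abs_of_pos (by omega)] at hgt
        omega
      · obtain ⟨hb1, hb2⟩ := hbnd i₂ hc2
        obtain ⟨_, _, e3⟩ := main i₂ hb1 hb2 hc2
        have := e3 i (by rw [abs_of_pos (by omega)]; omega)
        exact this

end
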